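/- arXiv:2502.05096 — 4 statements merged into one kernel-verified Lean document; each statement's English description precedes it below -/
import Mathlib

section
/- Let (C, C₋, C₊) be a Reedy category. If ([m], X) and ([n], Y) are objects of ∫N^{-,+}(C) whose underlying functors X : [m] → C and Y : [n] → C are identity-reflecting, then for every morphism (α, θ) : ([m], X) → ([n], Y) in ∫N^{-,+}(C) the map α : [m] → [n] is injective. In particular ∫N^{--,+}_+(C) is a full subcategory of ∫N^{-,+}(C). -/
namespace ReedyPaper

open CategoryTheory

universe v₂ u₂ v₁ u₁ v u

variable {C : Type u} [Category.{v} C]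

def IsIdMor {x y : C} (f : x ⟶ y) : Prop := ∃ h : x = y, f = eqToHom h

structure ReedyStruct (C : Type u) [Category.{v} C] where
  neg : MorphismProperty C
  pos : MorphismProperty C
  neg_id : ∀ x : C, neg (𝟙 x)
  pos_id : ∀ x : C, pos (𝟙 x)
  neg_comp : ∀ {x y z : C} (f : x ⟶ y) (g : y ⟶ z), neg f → neg g → neg (f ≫ g)
  pos_comp : ∀ {x y z : C} (f : x ⟶ y) (g : y ⟶ z), pos f → pos g → pos (f ≫ g)
  factor_existsUnique : ∀ {x y : C} (f : x ⟶ y),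
    ∃! t : Σ z : C, (x ⟶ z) × (z ⟶ y), neg t.2.1 ∧ pos t.2.2 ∧ t.2.1 ≫ t.2.2 = f
  wf : WellFounded (fun x y : C =>
    (∃ f : x ⟶ y, pos f ∧ ¬ IsIdMor f) ∨ (∃ f : y ⟶ x, neg f ∧ ¬ IsIdMor f))

structure ChainObj (C : Type u) [Category.{v} C] where
  n : ℕ
  X : Fin (n + 1) ⥤ C

structure ChainHom (P Q : ChainObj C) where
  α : Fin (P.n + 1) →o Fin (Q.n + 1)
  θ : ∀ i : Fin (P.n + 1), P.X.obj i ⟶ Q.X.obj (α i)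
  natural : ∀ {i j : Fin (P.n + 1)} (h : i ≤ j),
    P.X.map (homOfLE h) ≫ θ j = θ i ≫ Q.X.map (homOfLE (α.monotone h))

theorem ChainHom.ext' {P Q : ChainObj C} {f g : ChainHom P Q}
    (hα : f.α = g.α) (hθ : HEq f.θ g.θ) : f = g := by
  cases f; cases g; cases hα; cases hθ; rfl

def ChainHom.id (P : ChainObj C) : ChainHom P P where
  α := OrderHom.id
  θ i := 𝟙 _
  natural h := (Category.comp_id _).trans (Category.id_comp _).symm

def ChainHom.comp {P Q S : ChainObj C} (f : ChainHom P Q) (g : ChainHom Q S) :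
    ChainHom P S where
  α := g.α.comp f.α
  θ i := f.θ i ≫ g.θ (f.α i)
  natural {i j} h := by
    show P.X.map (homOfLE h) ≫ f.θ j ≫ g.θ (f.α j) =
      (f.θ i ≫ g.θ (f.α i)) ≫ S.X.map (homOfLE (g.α.monotone (f.α.monotone h)))
    rw [← Category.assoc, f.natural h, Category.assoc, g.natural (f.α.monotone h),
      ← Category.assoc]

instance : Category (ChainObj C) where
  Hom := ChainHom
  id := ChainHom.id
  comp := ChainHom.comp
  id_comp f := ChainHom.ext' rfl (heq_of_eq (funext fun i => Category.id_comp _))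
  comp_id f := ChainHom.ext' rfl (heq_of_eq (funext fun i => Category.comp_id _))
  assoc f g h := ChainHom.ext' rfl (heq_of_eq (funext fun i => Category.assoc _ _ _))

/-- The partial order on the hom-sets of `∫N(C)` (and of `∫N^{-,+}(C)`):
`(α, θ) ≤ (α', θ')` iff `α ≤ α'` pointwise and `θ'ᵢ = Y(α(i) ≤ α'(i)) ∘ θᵢ` for all `i`. -/
def ChainHom.le {P Q : ChainObj C} (f g : ChainHom P Q) : Prop :=
  (∀ i, f.α i ≤ g.α i) ∧
    ∀ (i : Fin (P.n + 1)) (h : f.α i ≤ g.α i), g.θ i = f.θ i ≫ Q.X.map (homOfLE h)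

theorem ChainHom.le_comp_right {P Q S : ChainObj C} {f f' : P ⟶ Q} (g : Q ⟶ S)
    (h : ChainHom.le f f') : ChainHom.le (f ≫ g) (f' ≫ g) := by
  refine ⟨fun i => g.α.monotone (h.1 i), fun i hi => ?_⟩
  show f'.θ i ≫ g.θ (f'.α i) = (f.θ i ≫ g.θ (f.α i)) ≫ S.X.map (homOfLE hi)
  rw [h.2 i (h.1 i), Category.assoc, g.natural (h.1 i), ← Category.assoc]
  rfl

theorem ChainHom.le_comp_left {P Q S : ChainObj C} (f : P ⟶ Q) {g g' : Q ⟶ S}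
    (h : ChainHom.le g g') : ChainHom.le (f ≫ g) (f ≫ g') := by
  refine ⟨fun i => h.1 (f.α i), fun i hi => ?_⟩
  show f.θ i ≫ g'.θ (f.α i) = (f.θ i ≫ g.θ (f.α i)) ≫ S.X.map (homOfLE hi)
  rw [h.2 (f.α i) (h.1 (f.α i)), ← Category.assoc]
  rfl

/-- Objects of `∫N^{-,+}(C)`: chains all of whose morphisms lie in `C₋`. -/
structure NegObj (R : ReedyStruct C) where
  n : ℕ
  X : Fin (n + 1) ⥤ C
  negMap : ∀ {i j : Fin (n + 1)} (h : i ≤ j), R.neg (X.map (homOfLE h))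

variable {R : ReedyStruct C}

/-- The underlying object of `∫N(C)`. -/
def NegObj.chain (P : NegObj R) : ChainObj C := ⟨P.n, P.X⟩

/-- Morphisms of `∫N^{-,+}(C)`: morphisms of `∫N(C)` all of whose components lie in `C₊`. -/
def NegHomT (P Q : NegObj R) : Type v :=
  { f : P.chain ⟶ Q.chain // ∀ i, R.pos (f.θ i) }

def NegHomT.id (P : NegObj R) : NegHomT P P := ⟨𝟙 P.chain, fun _ => R.pos_id _⟩

def NegHomT.comp {P Q S : NegObj R} (f : NegHomT P Q) (g : NegHomT Q S) : NegHomT P S :=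
  ⟨f.1 ≫ g.1, fun i => by
    show R.pos (f.1.θ i ≫ g.1.θ (f.1.α i))
    exact R.pos_comp _ _ (f.2 i) (g.2 _)⟩

theorem NegHomT.id_comp {P Q : NegObj R} (f : NegHomT P Q) : (NegHomT.id P).comp f = f := by
  apply Subtype.ext
  show 𝟙 P.chain ≫ f.1 = f.1
  exact Category.id_comp f.1

theorem NegHomT.comp_id {P Q : NegObj R} (f : NegHomT P Q) : f.comp (NegHomT.id Q) = f := by
  apply Subtype.ext
  show f.1 ≫ 𝟙 Q.chain = f.1
  exact Category.comp_id f.1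

theorem NegHomT.comp_assoc {P Q S T : NegObj R} (f : NegHomT P Q) (g : NegHomT Q S)
    (h : NegHomT S T) : (f.comp g).comp h = f.comp (g.comp h) := by
  apply Subtype.ext
  show (f.1 ≫ g.1) ≫ h.1 = f.1 ≫ (g.1 ≫ h.1)
  exact Category.assoc f.1 g.1 h.1

/-- The category `∫N^{-,+}(C)`. -/
instance : Category (NegObj R) where
  Hom := NegHomT
  id := NegHomT.id
  comp := NegHomT.comp
  id_comp := NegHomT.id_comp
  comp_id := NegHomT.comp_id
  assoc := NegHomT.comp_assoc

/-- The order on the hom-sets of `∫N^{-,+}(C)`. -/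
def NegHom.le {P Q : NegObj R} (f g : P ⟶ Q) : Prop := ChainHom.le f.1 g.1

/-- The equivalence relation `∼` on the hom-sets of `∫N^{-,+}(C)`: the
symmetric-transitive closure of `≤`. -/
def NegHom.equiv {P Q : NegObj R} (f g : P ⟶ Q) : Prop :=
  Relation.EqvGen (fun a b : P ⟶ Q => NegHom.le a b) f g

theorem NegHom.le_comp_right {P Q S : NegObj R} {f f' : P ⟶ Q} (g : Q ⟶ S)
    (h : NegHom.le f f') : NegHom.le (f ≫ g) (f' ≫ g) :=
  ChainHom.le_comp_right g.1 h

theorem NegHom.le_comp_left {P Q S : NegObj R} (f : P ⟶ Q) {g g' : Q ⟶ S}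
    (h : NegHom.le g g') : NegHom.le (f ≫ g) (f ≫ g') :=
  ChainHom.le_comp_left f.1 h

/-- Identity-reflectingness of a chain. -/
def NegObj.IdRefl (P : NegObj R) : Prop :=
  ∀ {i j : Fin (P.n + 1)} (h : i ≤ j), IsIdMor (P.X.map (homOfLE h)) → i = j

/-- Objects of `∫N^{--,+}_+(C)`: identity-reflecting chains in `C₋`. -/
structure StrictObj (R : ReedyStruct C) where
  toNegObj : NegObj R
  idRefl : toNegObj.IdRefl

/-- Morphisms of `∫N^{--,+}_+(C)`: morphisms of `∫N^{-,+}(C)` with `α` injective. -/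
def StrictHomT (P Q : StrictObj R) : Type v :=
  { f : P.toNegObj ⟶ Q.toNegObj // Function.Injective f.1.α }

def StrictHomT.id (P : StrictObj R) : StrictHomT P P :=
  ⟨𝟙 P.toNegObj, fun _ _ h => h⟩

def StrictHomT.comp {P Q S : StrictObj R} (f : StrictHomT P Q) (g : StrictHomT Q S) :
    StrictHomT P S :=
  ⟨f.1 ≫ g.1, fun _ _ h => f.2 (g.2 h)⟩

/-- The category `∫N^{--,+}_+(C)`. -/
instance : Category (StrictObj R) where
  Hom := StrictHomT
  id := StrictHomT.id
  comp := StrictHomT.comp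
  id_comp f := Subtype.ext (Category.id_comp f.1)
  comp_id f := Subtype.ext (Category.comp_id f.1)
  assoc f g h := Subtype.ext (Category.assoc f.1 g.1 h.1)

/-- The order on the hom-sets of `∫N^{--,+}_+(C)`. -/
def StrictHom.le {P Q : StrictObj R} (f g : P ⟶ Q) : Prop := NegHom.le f.1 g.1

/-- The equivalence relation `∼` on the hom-sets of `∫N^{--,+}_+(C)`. -/
def StrictHom.equiv {P Q : StrictObj R} (f g : P ⟶ Q) : Prop :=
  Relation.EqvGen (fun a b : P ⟶ Q => StrictHom.le a b) f g

theorem StrictHom.le_comp_right {P Q S : StrictObj R} {f f' : P ⟶ Q} (g : Q ⟶ S)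
    (h : StrictHom.le f f') : StrictHom.le (f ≫ g) (f' ≫ g) :=
  NegHom.le_comp_right g.1 h

theorem StrictHom.le_comp_left {P Q S : StrictObj R} (f : P ⟶ Q) {g g' : Q ⟶ S}
    (h : StrictHom.le g g') : StrictHom.le (f ≫ g) (f ≫ g') :=
  NegHom.le_comp_left f.1 h

/-- Objects of `Down_*(C)`: the same as those of `∫N^{-,+}(C)`. -/
structure DownStar (R : ReedyStruct C) where
  obj : NegObj R

/-- The category `Down_*(C)`: hom-sets are the quotients of those of `∫N^{-,+}(C)`
by the symmetric-transitive closure of `≤`. -/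
instance : Category (DownStar R) where
  Hom P Q := Quot (fun f g : P.obj ⟶ Q.obj => NegHom.le f g)
  id P := Quot.mk _ (𝟙 P.obj)
  comp {P Q S} f g :=
    Quot.lift
      (fun f' => Quot.lift (fun g' => Quot.mk _ (f' ≫ g'))
        (fun _ _ hg => Quot.sound (NegHom.le_comp_left f' hg)) g)
      (fun f₁ f₂ hf => Quot.inductionOn g (fun g' =>
        Quot.sound (NegHom.le_comp_right g' hf))) f
  id_comp f := Quot.inductionOn f fun f' => congrArg (Quot.mk _) (Category.id_comp f')
  comp_id f := Quot.inductionOn f fun f' => congrArg (Quot.mk _) (Category.comp_id f')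
  assoc f g h :=
    Quot.inductionOn f fun f' => Quot.inductionOn g fun g' => Quot.inductionOn h fun h' =>
      congrArg (Quot.mk _) (Category.assoc f' g' h')

/-- Objects of `Down(C)`: the same as those of `∫N^{--,+}_+(C)`. -/
structure Down (R : ReedyStruct C) where
  obj : StrictObj R

/-- The category `Down(C)`: hom-sets are the quotients of those of `∫N^{--,+}_+(C)`
by the symmetric-transitive closure of `≤`. -/
instance : Category (Down R) where
  Hom P Q := Quot (fun f g : P.obj ⟶ Q.obj => StrictHom.le f g)
  id P := Quot.mk _ (𝟙 P.obj)
  comp {P Q S} f g :=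
    Quot.lift
      (fun f' => Quot.lift (fun g' => Quot.mk _ (f' ≫ g'))
        (fun _ _ hg => Quot.sound (StrictHom.le_comp_left f' hg)) g)
      (fun f₁ f₂ hf => Quot.inductionOn g (fun g' =>
        Quot.sound (StrictHom.le_comp_right g' hf))) f
  id_comp f := Quot.inductionOn f fun f' => congrArg (Quot.mk _) (Category.id_comp f')
  comp_id f := Quot.inductionOn f fun f' => congrArg (Quot.mk _) (Category.comp_id f')
  assoc f g h :=
    Quot.inductionOn f fun f' => Quot.inductionOn g fun g' => Quot.inductionOn h fun h' =>
      congrArg (Quot.mk _) (Category.assoc f' g' h')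

/-- The quotient functor `∫N^{-,+}(C) → Down_*(C)`. -/
def qStar (R : ReedyStruct C) : NegObj R ⥤ DownStar R where
  obj P := ⟨P⟩
  map f := Quot.mk _ f
  map_id _ := rfl
  map_comp _ _ := rfl

/-- The inclusion functor `Down(C) → Down_*(C)`. -/
def downInclusion (R : ReedyStruct C) : Down R ⥤ DownStar R where
  obj P := ⟨P.obj.toNegObj⟩
  map {P Q} f :=
    Quot.lift (fun f' : P.obj ⟶ Q.obj => Quot.mk _ f'.1) (fun _ _ h => Quot.sound h) f
  map_id _ := rfl
  map_comp {P Q S} f g := by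
    induction f using Quot.ind
    induction g using Quot.ind
    rfl

/-- The last-component functor `∫N(C) → C`. -/
def lastChain : ChainObj C ⥤ C where
  obj P := P.X.obj (Fin.last P.n)
  map {P Q} f := f.θ (Fin.last P.n) ≫ Q.X.map (homOfLE (Fin.le_last (f.α (Fin.last P.n))))
  map_id P := by
    show 𝟙 (P.X.obj (Fin.last P.n)) ≫ P.X.map (homOfLE (Fin.le_last (Fin.last P.n))) = 𝟙 _
    rw [Category.id_comp]
    exact P.X.map_id _
  map_comp {P Q S} f g := by
    show (f.θ (Fin.last P.n) ≫ g.θ (f.α (Fin.last P.n))) ≫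
        S.X.map (homOfLE (Fin.le_last (g.α (f.α (Fin.last P.n))))) =
      (f.θ (Fin.last P.n) ≫ Q.X.map (homOfLE (Fin.le_last (f.α (Fin.last P.n))))) ≫
        g.θ (Fin.last Q.n) ≫ S.X.map (homOfLE (Fin.le_last (g.α (Fin.last Q.n))))
    rw [Category.assoc, Category.assoc, ← Category.assoc (Q.X.map _),
      g.natural (Fin.le_last (f.α (Fin.last P.n))), Category.assoc, ← Functor.map_comp,
      homOfLE_comp]

theorem lastChain_eq_of_le {P Q : ChainObj C} {f g : P ⟶ Q} (h : ChainHom.le f g) :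
    lastChain.map f = lastChain.map g := by
  show f.θ (Fin.last P.n) ≫ Q.X.map (homOfLE (Fin.le_last (f.α (Fin.last P.n)))) =
    g.θ (Fin.last P.n) ≫ Q.X.map (homOfLE (Fin.le_last (g.α (Fin.last P.n))))
  rw [h.2 (Fin.last P.n) (h.1 (Fin.last P.n)), Category.assoc, ← Functor.map_comp,
    homOfLE_comp]

/-- The forgetful functor `∫N^{-,+}(C) → ∫N(C)`. -/
def negForget (R : ReedyStruct C) : NegObj R ⥤ ChainObj C where
  obj P := P.chain
  map f := f.1
  map_id _ := rfl
  map_comp _ _ := rfl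

/-- The last-component functor `∫N^{-,+}(C) → C`. -/
def lastNeg (R : ReedyStruct C) : NegObj R ⥤ C := negForget R ⋙ lastChain

/-- The forgetful functor `∫N^{--,+}_+(C) → ∫N^{-,+}(C)`. -/
def strictForget (R : ReedyStruct C) : StrictObj R ⥤ NegObj R where
  obj P := P.toNegObj
  map f := f.1
  map_id _ := rfl
  map_comp _ _ := rfl

/-- The last-component functor `∫N^{--,+}_+(C) → C`. -/
def lastStrict (R : ReedyStruct C) : StrictObj R ⥤ C := strictForget R ⋙ lastNeg R

/-- The last-component functor `Down_*(C) → C`. -/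
def lastDownStar (R : ReedyStruct C) : DownStar R ⥤ C where
  obj P := (lastNeg R).obj P.obj
  map {P Q} f :=
    Quot.lift (fun f' : P.obj ⟶ Q.obj => (lastNeg R).map f')
      (fun _ _ h => lastChain_eq_of_le h) f
  map_id P := (lastNeg R).map_id P.obj
  map_comp {P Q S} f g := by
    induction f using Quot.ind
    induction g using Quot.ind
    exact (lastNeg R).map_comp _ _

/-- The last-component functor `Down(C) → C`. -/
def lastDown (R : ReedyStruct C) : Down R ⥤ C where
  obj P := (lastStrict R).obj P.obj
  map {P Q} f :=
    Quot.lift (fun f' : P.obj ⟶ Q.obj => (lastStrict R).map f')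
      (fun _ _ h => lastChain_eq_of_le h) f
  map_id P := (lastStrict R).map_id P.obj
  map_comp {P Q S} f g := by
    induction f using Quot.ind
    induction g using Quot.ind
    exact (lastStrict R).map_comp _ _

/-- The wide subcategory `Γ₋` of `∫N^{-,+}(C)`: morphisms of the form
`(σ, id) : ([m], X ∘ σ) → ([n], X)` with `σ` surjective, i.e. morphisms whose simplicial
component is surjective and all of whose components are identities. -/
def GammaNeg (R : ReedyStruct C) {P Q : NegObj R} (f : P ⟶ Q) : Prop :=
  Function.Surjective f.1.α ∧ ∀ i, IsIdMor (f.1.θ i)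

/-- The wide subcategory `Γ₊` of `∫N^{-,+}(C)`: morphisms `(δ, θ)` with `δ` injective. -/
def GammaPos (R : ReedyStruct C) {P Q : NegObj R} (f : P ⟶ Q) : Prop :=
  Function.Injective f.1.α

/-- Whiskering (precomposition) with `lastF` is bijective on natural transformations
between functors out of `C`. -/
def WhiskerUnique {Γ : Type u₁} [Category.{v₁} Γ] (lastF : Γ ⥤ C) : Prop :=
  ∀ {D : Type u₂} [Category.{v₂} D] (F G : C ⥤ D)
    (ε : lastF ⋙ F ⟶ lastF ⋙ G), ∃! ε' : F ⟶ G, Functor.whiskerLeft lastF ε' = ε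

/-- `lastF : Γ ⥤ C` is a weak 1-localization of `Γ` at the `last`-weak equivalences
(the morphisms sent by `lastF` to identities). -/
def IsWeakLocalizationAtLastWeq {Γ : Type u₁} [Category.{v₁} Γ] (lastF : Γ ⥤ C) : Prop :=
  (∀ {P Q : Γ} (f : P ⟶ Q), IsIdMor (lastF.map f) → IsIso (lastF.map f)) ∧
  (∀ {E : Type u₂} [Category.{v₂} E] (G : Γ ⥤ E),
    (∀ {P Q : Γ} (f : P ⟶ Q), IsIdMor (lastF.map f) → IsIso (G.map f)) →
    ∃ H : C ⥤ E, Nonempty (lastF ⋙ H ≅ G)) ∧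
  (∀ {E : Type u₂} [Category.{v₂} E] (H H' : C ⥤ E) (θ : lastF ⋙ H ≅ lastF ⋙ H'),
    ∃! θ' : H ≅ H', Functor.isoWhiskerLeft lastF θ' = θ)

theorem pos_eqToHom (R : ReedyStruct C) {x y : C} (e : x = y) : R.pos (eqToHom e) := by
  subst e; exact R.pos_id x

theorem isIdMor_of_sigma_eq {x y z : C} {g : x ⟶ y} {p : y ⟶ z} {q : x ⟶ z}
    (h : (⟨x, 𝟙 x, q⟩ : Σ w : C, (x ⟶ w) × (w ⟶ z)) = ⟨y, g, p⟩) : IsIdMor g := by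
  obtain ⟨h1, h2⟩ := Sigma.mk.inj_iff.mp h
  subst h1
  obtain ⟨hg, -⟩ := Prod.mk.inj (eq_of_heq h2)
  exact ⟨rfl, hg.symm⟩

theorem statement1_aux {R : ReedyStruct C} {P Q : NegObj R} (hP : P.IdRefl) (f : P ⟶ Q)
    {i j : Fin (P.n + 1)} (hij : i ≤ j) (e : f.1.α i = f.1.α j) : i = j := by
  have hle : f.1.α i ≤ f.1.α j := f.1.α.monotone hij
  have hmap : Q.X.map (homOfLE hle) = eqToHom (congrArg Q.X.obj e) := by
    have : homOfLE hle = eqToHom e := Subsingleton.elim _ _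
    exact (congrArg Q.X.map this).trans (eqToHom_map _ _)
  set m : P.X.obj i ⟶ Q.X.obj (f.1.α j) := f.1.θ i ≫ Q.X.map (homOfLE hle) with hm
  have hpos : R.pos m := by
    rw [hm, hmap]
    exact R.pos_comp _ _ (f.2 i) (pos_eqToHom R _)
  obtain ⟨t, ht, huniq⟩ := R.factor_existsUnique m
  have h1 : t = ⟨P.X.obj i, 𝟙 _, m⟩ :=
    (huniq _ ⟨R.neg_id _, hpos, Category.id_comp m⟩).symm
  have h2 : t = ⟨P.X.obj j, P.X.map (homOfLE hij), f.1.θ j⟩ :=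
    (huniq _ ⟨P.negMap hij, f.2 j, f.1.natural hij⟩).symm
  exact hP hij (isIdMor_of_sigma_eq (h1.symm.trans h2))

section Statements

variable (R : ReedyStruct C)

theorem statement1 {P Q : NegObj R} (hP : P.IdRefl) (hQ : Q.IdRefl) (f : P ⟶ Q) :
    Function.Injective f.1.α := by
  intro i j e
  rcases le_total i j with h | h
  · exact statement1_aux hP f h e
  · exact (statement1_aux hP f h e.symm).symm

end Statements

end ReedyPaper
end

section
/- Let (C, C₋, C₊) be a Reedy category and (α, θ) : ([m], X) → ([n], Y) a morphism in ∫N^{-,+}(C). Then the map sending a morphism (β, φ) with (α, θ) ≤ (β, φ) to β, from the set {(β, φ) : (α, θ) ≤ (β, φ)} (ordered by ≤) to the set {β : [m] → [n] in Δ with α ≤ β pointwise} (ordered pointwise), is injective and order-reflecting: if (β, φ) and (β', φ') both lie above (α, θ) and β ≤ β' pointwise, then (β, φ) ≤ (β', φ'). -/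
namespace ReedyPaper

open CategoryTheory

universe v₂ u₂ v₁ u₁ v u

variable {C : Type u} [Category.{v} C]

variable {R : ReedyStruct C}

section Statements

variable (R : ReedyStruct C)

theorem statement2 {P Q : NegObj R} (f : P ⟶ Q) :
    (∀ g g' : P ⟶ Q, NegHom.le f g → NegHom.le f g' → g.1.α = g'.1.α → g = g') ∧
    (∀ g g' : P ⟶ Q, NegHom.le f g → NegHom.le f g' →
      (∀ i, g.1.α i ≤ g'.1.α i) → NegHom.le g g') := by
  constructor
  · intro g g' hg hg' hα
    obtain ⟨⟨gα, gθ, gn⟩, gp⟩ := g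
    obtain ⟨⟨gα', gθ', gn'⟩, gp'⟩ := g'
    apply Subtype.ext
    cases hα
    refine ChainHom.ext' rfl (heq_of_eq ?_)
    funext i
    exact (hg.2 i (hg.1 i)).trans (hg'.2 i (hg'.1 i)).symm
  · intro g g' hg hg' hle
    refine ⟨hle, fun i hi => ?_⟩
    rw [hg.2 i (hg.1 i), hg'.2 i (hg'.1 i), Category.assoc, ← Functor.map_comp,
      homOfLE_comp]

end Statements

end ReedyPaper
end

section
/- Let (C, C₋, C₊) be a Reedy category and ([m], X), ([n], Y) objects of ∫N^{-,+}(C). Then every ∼-equivalence class in the hom-set Hom(([m], X), ([n], Y)) possesses a maximum with respect to ≤: an element of the class that is ≥ every element of the class. -/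
namespace ReedyPaper

open CategoryTheory

universe v₂ u₂ v₁ u₁ v u

variable {C : Type u} [Category.{v} C]

variable {R : ReedyStruct C}

section Aux

theorem ChainHom.le_refl' {P Q : ChainObj C} (f : P ⟶ Q) : ChainHom.le f f :=
  ⟨fun _ => le_rfl, fun i hi => by
    rw [show homOfLE hi = 𝟙 (f.α i) from Subsingleton.elim _ _,
      CategoryTheory.Functor.map_id, Category.comp_id]⟩

theorem ChainHom.le_trans' {P Q : ChainObj C} {f g h : P ⟶ Q}
    (h₁ : ChainHom.le f g) (h₂ : ChainHom.le g h) : ChainHom.le f h :=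
  ⟨fun i => (h₁.1 i).trans (h₂.1 i), fun i hi => by
    rw [h₂.2 i (h₂.1 i), h₁.2 i (h₁.1 i), Category.assoc, ← Functor.map_comp,
      homOfLE_comp]⟩

theorem pos_congr {R : ReedyStruct C} {n : ℕ} {Y : Fin (n + 1) ⥤ C} {x : C}
    {a b b' : Fin (n + 1)} (e : b = b') (hab : a ≤ b) (hab' : a ≤ b') (θ : x ⟶ Y.obj a)
    (hp : R.pos (θ ≫ Y.map (homOfLE hab))) : R.pos (θ ≫ Y.map (homOfLE hab')) := by
  subst e; exact hp

theorem span_complete {R : ReedyStruct C} {P Q : NegObj R} {h g₁ g₂ : P ⟶ Q}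
    (h₁ : NegHom.le h g₁) (h₂ : NegHom.le h g₂) :
    ∃ g : P ⟶ Q, NegHom.le g₁ g ∧ NegHom.le g₂ g := by
  let β : Fin (P.n + 1) →o Fin (Q.n + 1) :=
    ⟨fun i => g₁.1.α i ⊔ g₂.1.α i,
      fun i j hij => sup_le_sup (g₁.1.α.monotone hij) (g₂.1.α.monotone hij)⟩
  have hβ : ∀ i, h.1.α i ≤ β i := fun i => (h₁.1 i).trans le_sup_left
  let gc : P.chain ⟶ Q.chain :=
    { α := β
      θ := fun i => h.1.θ i ≫ Q.chain.X.map (homOfLE (hβ i))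
      natural := fun {i j} hij => by
        rw [← Category.assoc, h.1.natural hij, Category.assoc, ← Functor.map_comp,
          homOfLE_comp, Category.assoc, ← Functor.map_comp, homOfLE_comp] }
  have hpos : ∀ i, R.pos (gc.θ i) := by
    intro i
    show R.pos (h.1.θ i ≫ Q.chain.X.map (homOfLE (hβ i)))
    rcases le_total (g₁.1.α i) (g₂.1.α i) with hle | hle
    · have hp : R.pos (h.1.θ i ≫ Q.chain.X.map (homOfLE (h₂.1 i))) := by
        rw [← h₂.2 i (h₂.1 i)]; exact g₂.2 i
      exact pos_congr (sup_eq_right.2 hle).symm (h₂.1 i) _ _ hp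
    · have hp : R.pos (h.1.θ i ≫ Q.chain.X.map (homOfLE (h₁.1 i))) := by
        rw [← h₁.2 i (h₁.1 i)]; exact g₁.2 i
      exact pos_congr (sup_eq_left.2 hle).symm (h₁.1 i) _ _ hp
  refine ⟨⟨gc, hpos⟩, ⟨fun i => le_sup_left, fun i hi => ?_⟩,
    ⟨fun i => le_sup_right, fun i hi => ?_⟩⟩
  · rw [h₁.2 i (h₁.1 i), Category.assoc, ← Functor.map_comp, homOfLE_comp]
  · rw [h₂.2 i (h₂.1 i), Category.assoc, ← Functor.map_comp, homOfLE_comp]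

theorem directed_of_equiv {R : ReedyStruct C} {P Q : NegObj R} {f g : P ⟶ Q}
    (h : NegHom.equiv f g) : ∃ u : P ⟶ Q, NegHom.le f u ∧ NegHom.le g u := by
  induction h with
  | rel a b hab => exact ⟨b, hab, ChainHom.le_refl' _⟩
  | refl a => exact ⟨a, ChainHom.le_refl' _, ChainHom.le_refl' _⟩
  | symm a b _ ih => exact ⟨ih.choose, ih.choose_spec.2, ih.choose_spec.1⟩
  | trans a b c _ _ ih₁ ih₂ =>
    obtain ⟨u₁, hau, hbu⟩ := ih₁
    obtain ⟨u₂, hbu₂, hcu⟩ := ih₂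
    obtain ⟨w, hw₁, hw₂⟩ := span_complete hbu hbu₂
    exact ⟨w, ChainHom.le_trans' hau hw₁, ChainHom.le_trans' hcu hw₂⟩

end Aux

section Statements

variable (R : ReedyStruct C)

theorem statement8 {P Q : NegObj R} (f : P ⟶ Q) :
    ∃ m : P ⟶ Q, NegHom.equiv f m ∧ ∀ g : P ⟶ Q, NegHom.equiv f g → NegHom.le g m := by
  classical
  set rank : (P ⟶ Q) → ℕ := fun g => ∑ i, (g.1.α i : ℕ) with hrank_def
  set S : Set ℕ := rank '' {g | NegHom.equiv f g} with hS_def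
  have hne : S.Nonempty := ⟨rank f, f, Relation.EqvGen.refl f, rfl⟩
  have hbdd : BddAbove S := by
    refine ⟨(P.n + 1) * Q.n, ?_⟩
    rintro r ⟨g, -, rfl⟩
    calc rank g ≤ ∑ _i : Fin (P.n + 1), Q.n :=
          Finset.sum_le_sum (fun i _ => Fin.is_le _)
      _ = (P.n + 1) * Q.n := by simp [Finset.sum_const, Finset.card_univ]
  obtain ⟨m, hfm, hrm⟩ := Nat.sSup_mem hne hbdd
  refine ⟨m, hfm, fun g hg => ?_⟩
  obtain ⟨u, hmu, hgu⟩ :=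
    directed_of_equiv (Relation.EqvGen.trans _ _ _ (Relation.EqvGen.symm _ _ hfm) hg)
  have hfu : NegHom.equiv f u :=
    Relation.EqvGen.trans _ _ _ hfm (Relation.EqvGen.rel _ _ hmu)
  have hru : rank u ≤ rank m := by
    rw [hrm]; exact le_csSup hbdd ⟨u, hfu, rfl⟩
  have hmr : rank m ≤ rank u := Finset.sum_le_sum fun i _ => hmu.1 i
  have hαeq : ∀ i, m.1.α i = u.1.α i := by
    intro i
    exact Fin.ext (((Finset.sum_eq_sum_iff_of_le (f := fun i => ((m.1.α i : Fin _) : ℕ))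
      (g := fun i => ((u.1.α i : Fin _) : ℕ)) (fun i _ => hmu.1 i)).1
      (le_antisymm hmr hru)) i (Finset.mem_univ i))
  have hum : NegHom.le u m := by
    refine ⟨fun i => le_of_eq (hαeq i).symm, fun i hi => ?_⟩
    rw [hmu.2 i (hmu.1 i), Category.assoc, ← Functor.map_comp, homOfLE_comp,
      show homOfLE ((hmu.1 i).trans hi) = 𝟙 (m.1.α i) from Subsingleton.elim _ _,
      CategoryTheory.Functor.map_id, Category.comp_id]
  exact ChainHom.le_trans' hgu hum

end Statements

end ReedyPaper
end

section
/- Let (C, C₋, C₊) be a Reedy category. Then the fully faithful inclusion functor Down(C) → Down_*(C) is an equivalence of categories; equivalently, every object of Down_*(C) is isomorphic in Down_*(C) to an object of Down(C). -/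
namespace ReedyPaper

open CategoryTheory

universe v₂ u₂ v₁ u₁ v u

variable {C : Type u} [Category.{v} C]

variable {R : ReedyStruct C}

section Statements

variable (R : ReedyStruct C)

-- Helper lemmas --------------------------------------------------------------

theorem isIdMor_id (x : C) : IsIdMor (𝟙 x) := ⟨rfl, (eqToHom_refl x rfl).symm⟩

theorem pos_of_isIdMor {x y : C} {f : x ⟶ y} (h : IsIdMor f) : R.pos f := by
  obtain ⟨e, rfl⟩ := h; subst e; rw [eqToHom_refl]; exact R.pos_id x

theorem isIdMor_map_of_eq {N : ℕ} (X : Fin N ⥤ C) {a b : Fin N} (h : a ≤ b) (e : a = b) :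
    IsIdMor (X.map (homOfLE h)) := by
  subst e
  rw [show homOfLE h = 𝟙 a from Subsingleton.elim _ _, X.map_id]
  exact isIdMor_id _

theorem isIdMor_map_congr {N : ℕ} (X : Fin N ⥤ C) {a b a' b' : Fin N} (h : a ≤ b)
    (h' : a' ≤ b') (ea : a = a') (eb : b = b')
    (hi : IsIdMor (X.map (homOfLE h'))) : IsIdMor (X.map (homOfLE h)) := by
  subst ea; subst eb
  rwa [show homOfLE h = homOfLE h' from Subsingleton.elim _ _]

/-- If `f ≫ p = q` with `f` negative and `p, q` positive, then `f` is an identity-up-to-eq. -/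
theorem neg_isIdMor_of_fact {x y w : C} (f : x ⟶ y) (p : y ⟶ w) (q : x ⟶ w)
    (hf : R.neg f) (hp : R.pos p) (hq : R.pos q) (hcomp : f ≫ p = q) : IsIdMor f := by
  obtain ⟨t, -, huniq⟩ := R.factor_existsUnique q
  have e1 : (⟨y, f, p⟩ : Σ z : C, (x ⟶ z) × (z ⟶ w)) = t := huniq _ ⟨hf, hp, hcomp⟩
  have e2 : (⟨x, 𝟙 x, q⟩ : Σ z : C, (x ⟶ z) × (z ⟶ w)) = t :=
    huniq _ ⟨R.neg_id x, hq, Category.id_comp q⟩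
  have e := e1.trans e2.symm
  have hy : y = x := congrArg Sigma.fst e
  subst hy
  injection e with e1 e2
  refine ⟨rfl, ?_⟩
  rw [eqToHom_refl]
  exact congrArg Prod.fst e2

/-- Cancellation: if a composite of negative morphisms is an identity-up-to-eq,
so is each factor. -/
theorem cancel_neg {x y z : C} (f : x ⟶ y) (g : y ⟶ z) (hf : R.neg f) (hg : R.neg g)
    (h : IsIdMor (f ≫ g)) : IsIdMor f ∧ IsIdMor g := by
  obtain ⟨e, hfg⟩ := h
  subst e
  rw [eqToHom_refl] at hfg
  have hfid : IsIdMor f := by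
    by_contra hfn
    have hgn : ¬ IsIdMor g := by
      rintro ⟨e', rfl⟩
      subst e'
      rw [eqToHom_refl, Category.comp_id] at hfg
      exact hfn ⟨rfl, by rw [eqToHom_refl, hfg]⟩
    set r := fun a b : C =>
      (∃ f : a ⟶ b, R.pos f ∧ ¬ IsIdMor f) ∨ (∃ f : b ⟶ a, R.neg f ∧ ¬ IsIdMor f) with hr
    exact R.wf.asymmetric y x (Or.inr ⟨f, hf, hfn⟩) (Or.inr ⟨g, hg, hgn⟩)
  obtain ⟨e', rfl⟩ := hfid
  subst e'
  rw [eqToHom_refl, Category.id_comp] at hfg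
  exact ⟨isIdMor_id _, ⟨rfl, by rw [eqToHom_refl, hfg]⟩⟩

-- Injectivity of the simplicial component -------------------------------------

theorem alpha_injective_aux {P Q : NegObj R} (hP : P.IdRefl) (f : P ⟶ Q)
    {i j : Fin (P.n + 1)} (h : i ≤ j) (e : f.1.α i = f.1.α j) : i = j := by
  apply hP h
  refine neg_isIdMor_of_fact R (P.X.map (homOfLE h)) (f.1.θ j)
    (f.1.θ i ≫ Q.X.map (homOfLE (f.1.α.monotone h))) (P.negMap h) (f.2 j) ?_
    (f.1.natural h)
  exact R.pos_comp _ _ (f.2 i) (pos_of_isIdMor R (isIdMor_map_of_eq Q.X _ e))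

theorem alpha_injective {P Q : NegObj R} (hP : P.IdRefl) (f : P ⟶ Q) :
    Function.Injective f.1.α := by
  intro i j e
  rcases le_total i j with h | h
  · exact alpha_injective_aux R hP f h e
  · exact (alpha_injective_aux R hP f h e.symm).symm

-- Full and faithful -----------------------------------------------------------

instance : (downInclusion R).Faithful where
  map_injective {P Q} f g hfg := by
    induction f using Quot.ind with | _ f =>
    induction g using Quot.ind with | _ g =>
    have h : Relation.EqvGen (fun a b : P.obj.toNegObj ⟶ Q.obj.toNegObj => NegHom.le a b)
        f.1 g.1 := Quot.eqvGen_exact hfg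
    have key : ∀ a b : P.obj.toNegObj ⟶ Q.obj.toNegObj,
        Relation.EqvGen (fun a b => NegHom.le a b) a b →
        (Quot.mk (fun a b : P.obj ⟶ Q.obj => StrictHom.le a b)
            ⟨a, alpha_injective R P.obj.idRefl a⟩ : P ⟶ Q) =
          Quot.mk _ ⟨b, alpha_injective R P.obj.idRefl b⟩ := by
      intro a b hab
      induction hab with
      | rel a b hab => exact Quot.sound hab
      | refl a => rfl
      | symm a b _ ih => exact ih.symm
      | trans a b c _ _ ih1 ih2 => exact ih1.trans ih2
    have := key f.1 g.1 h
    exact this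

instance : (downInclusion R).Full where
  map_surjective {P Q} f := by
    induction f using Quot.ind with | _ f =>
    exact ⟨Quot.mk _ ⟨f, alpha_injective R P.obj.idRefl f⟩, rfl⟩

-- Essential surjectivity -------------------------------------------------------

/-- Collapsing an identity-up-to-eq step in a chain. -/
theorem collapse {m k : ℕ} (hk1 : k < m + 2) (hk2 : k + 1 < m + 2)
    (X : Fin (m + 2) ⥤ C) (hneg : ∀ {i j : Fin (m + 2)} (h : i ≤ j), R.neg (X.map (homOfLE h)))
    (hid : IsIdMor (X.map (homOfLE (show (⟨k, hk1⟩ : Fin (m + 2)) ≤ ⟨k + 1, hk2⟩ from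
      Fin.mk_le_mk.mpr (Nat.le_succ _))))) :
    ∃ (Y : Fin (m + 1) ⥤ C) (hY : ∀ {i j : Fin (m + 1)} (h : i ≤ j), R.neg (Y.map (homOfLE h))),
      Nonempty ((DownStar.mk ⟨m + 1, X, hneg⟩ : DownStar R) ≅ DownStar.mk ⟨m, Y, hY⟩) := by
  -- delta skips the index k; sigma collapses k+1 onto k... (see below)
  set δ : Fin (m + 1) →o Fin (m + 2) :=
    ⟨fun i => ⟨if i.val < k then i.val else i.val + 1, by split <;> omega⟩, by
      intro a b hab
      have := (Fin.le_def).mp hab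
      simp only [Fin.mk_le_mk]
      split <;> split <;> omega⟩ with hδ
  set σ : Fin (m + 2) →o Fin (m + 1) :=
    ⟨fun i => ⟨if i.val ≤ k then i.val else i.val - 1, by
        have := i.isLt; split <;> omega⟩, by
      intro a b hab
      have := (Fin.le_def).mp hab
      simp only [Fin.mk_le_mk]
      split <;> split <;> omega⟩ with hσ
  have hδval : ∀ i : Fin (m + 1), (δ i).val = if i.val < k then i.val else i.val + 1 := by
    intro i; rfl
  have hσval : ∀ i : Fin (m + 2), (σ i).val = if i.val ≤ k then i.val else i.val - 1 := by
    intro i; rfl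
  have hσδ : ∀ i : Fin (m + 1), σ (δ i) = i := by
    intro i
    apply Fin.ext
    rw [hσval, hδval]
    have := i.isLt
    split <;> split <;> omega
  have hδσval : ∀ i : Fin (m + 2), (δ (σ i)).val = if i.val = k then k + 1 else i.val := by
    intro i
    rw [hδval, hσval]
    have := i.isLt
    split <;> split <;> split <;> omega
  have hle : ∀ i : Fin (m + 2), i ≤ δ (σ i) := by
    intro i
    rw [Fin.le_def, hδσval]
    split <;> omega
  -- the collapsed chain
  set Y : Fin (m + 1) ⥤ C :=
    { obj := fun i => X.obj (δ i)
      map := fun {i j} f => X.map (homOfLE (δ.monotone (leOfHom f)))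
      map_id := fun i =>
        (congrArg X.map (Subsingleton.elim _ (𝟙 (δ i)))).trans (X.map_id (δ i))
      map_comp := fun {i j l} f g =>
        (congrArg X.map (Subsingleton.elim _
            (homOfLE (δ.monotone (leOfHom f)) ≫ homOfLE (δ.monotone (leOfHom g))))).trans
          (X.map_comp _ _) } with hY
  have hYneg : ∀ {i j : Fin (m + 1)} (h : i ≤ j), R.neg (Y.map (homOfLE h)) := by
    intro i j h; exact hneg _
  refine ⟨Y, hYneg, ?_⟩
  set P : NegObj R := ⟨m + 1, X, hneg⟩ with hP
  set Q : NegObj R := ⟨m, Y, hYneg⟩ with hQ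
  -- all the θ components of `s` are identities-up-to-eq
  have hsid : ∀ (i : Fin (m + 2)) (h : i ≤ δ (σ i)), IsIdMor (X.map (homOfLE h)) := by
    intro i h
    by_cases hik : i.val = k
    · refine isIdMor_map_congr X h _ (Fin.ext hik) (Fin.ext (by rw [hδσval]; simp [hik])) hid
    · exact isIdMor_map_of_eq X h (Fin.ext (by rw [hδσval]; simp [hik]))
  -- the morphism s : P ⟶ Q
  set s : P ⟶ Q :=
    ⟨{ α := σ
       θ := fun i => X.map (homOfLE (hle i))
       natural := fun {i j} h => by
         show X.map (homOfLE h) ≫ X.map (homOfLE (hle j)) =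
           X.map (homOfLE (hle i)) ≫ X.map (homOfLE (δ.monotone (σ.monotone h)))
         exact ((X.map_comp _ _).symm.trans
           (congrArg X.map (Subsingleton.elim _ _))).trans (X.map_comp _ _) },
     fun i => pos_of_isIdMor R (hsid i (hle i))⟩ with hs
  -- the morphism d : Q ⟶ P
  set d : Q ⟶ P :=
    ⟨{ α := δ
       θ := fun i => 𝟙 (X.obj (δ i))
       natural := fun {i j} h => by
         show X.map (homOfLE (δ.monotone (leOfHom (homOfLE h)))) ≫ 𝟙 (X.obj (δ j)) =
           𝟙 (X.obj (δ i)) ≫ X.map (homOfLE (δ.monotone h))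
         exact (Category.comp_id _).trans
           ((congrArg X.map (Subsingleton.elim _ _)).trans (Category.id_comp _).symm) },
     fun i => R.pos_id _⟩ with hd
  refine ⟨{ hom := Quot.mk _ s, inv := Quot.mk _ d, hom_inv_id := ?_, inv_hom_id := ?_ }⟩
  · show Quot.mk _ (s ≫ d) = Quot.mk _ (𝟙 P)
    refine (Quot.sound ?_).symm
    constructor
    · intro i; exact hle i
    · intro i h
      show X.map (homOfLE (hle i)) ≫ 𝟙 (X.obj (δ (σ i))) = 𝟙 (X.obj i) ≫ X.map (homOfLE h)
      exact (Category.comp_id _).trans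
        ((congrArg X.map (Subsingleton.elim _ _)).trans (Category.id_comp _).symm)
  · show Quot.mk _ (d ≫ s) = Quot.mk _ (𝟙 Q)
    refine (Quot.sound ?_).symm
    constructor
    · intro i; exact (hσδ i).symm.le
    · intro i h
      show 𝟙 (X.obj (δ i)) ≫ X.map (homOfLE (hle (δ i))) =
        𝟙 (X.obj (δ i)) ≫ X.map (homOfLE (δ.monotone h))
      exact congrArg (𝟙 (X.obj (δ i)) ≫ ·) (congrArg X.map (Subsingleton.elim _ _))

theorem exists_strict_core : ∀ n pn : ℕ, pn ≤ n → ∀ (X : Fin (pn + 1) ⥤ C)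
    (hneg : ∀ {i j : Fin (pn + 1)} (h : i ≤ j), R.neg (X.map (homOfLE h))),
    ∃ Q : StrictObj R,
      Nonempty ((DownStar.mk ⟨pn, X, hneg⟩ : DownStar R) ≅ DownStar.mk Q.toNegObj) := by
  intro n
  induction n with
  | zero =>
    intro pn hpn X hneg
    refine ⟨⟨⟨pn, X, hneg⟩, fun {i j} h _ => Fin.ext ?_⟩, ⟨Iso.refl _⟩⟩
    have h1 : (i : ℕ) < pn + 1 := i.isLt
    have h2 : (j : ℕ) < pn + 1 := j.isLt
    omega
  | succ n ih =>
    intro pn hpn X hneg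
    by_cases hr : (⟨pn, X, hneg⟩ : NegObj R).IdRefl
    · exact ⟨⟨_, hr⟩, ⟨Iso.refl _⟩⟩
    · have hex : ∃ (i j : Fin (pn + 1)) (h : i ≤ j),
          IsIdMor (X.map (homOfLE h)) ∧ i ≠ j := by
        by_contra hc
        push_neg at hc
        exact hr fun {i j} h hm => hc i j h hm
      obtain ⟨i, j, h, hm, hne⟩ := hex
      have hij : i.val < j.val := by
        have hv1 := (Fin.le_def).mp h
        have hv2 : i.val ≠ j.val := fun e => hne (Fin.ext e)
        omega
      obtain ⟨m, rfl⟩ : ∃ m, pn = m + 1 := ⟨pn - 1, by have := j.isLt; omega⟩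
      -- consecutive identity step at k = i.val
      have hk1 : i.val < m + 2 := i.isLt
      have hk2 : i.val + 1 < m + 2 := by have := j.isLt; omega
      have hstep : IsIdMor (X.map (homOfLE (show (⟨i.val, hk1⟩ : Fin (m + 2)) ≤
          ⟨i.val + 1, hk2⟩ from Fin.mk_le_mk.mpr (Nat.le_succ _)))) := by
        have h1 : i ≤ (⟨i.val + 1, hk2⟩ : Fin (m + 2)) := Fin.le_def.mpr (Nat.le_succ _)
        have h2 : (⟨i.val + 1, hk2⟩ : Fin (m + 2)) ≤ j := Fin.le_def.mpr hij
        have hsplit : X.map (homOfLE h1) ≫ X.map (homOfLE h2) = X.map (homOfLE h) :=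
          (X.map_comp _ _).symm.trans (congrArg X.map (Subsingleton.elim _ _))
        rw [← hsplit] at hm
        exact isIdMor_map_congr X _ h1 (Fin.ext rfl) rfl
          (cancel_neg R _ _ (hneg h1) (hneg h2) hm).1
      obtain ⟨Y, hY, ⟨e⟩⟩ := collapse R hk1 hk2 X hneg hstep
      obtain ⟨Q, ⟨e2⟩⟩ := ih m (by omega) Y hY
      exact ⟨Q, ⟨e.trans e2⟩⟩

theorem exists_strict (P : NegObj R) :
    ∃ Q : StrictObj R,
      Nonempty ((DownStar.mk P : DownStar R) ≅ DownStar.mk Q.toNegObj) := by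
  obtain ⟨pn, X, hneg⟩ := P
  exact exists_strict_core R pn pn le_rfl X hneg

instance : (downInclusion R).EssSurj where
  mem_essImage P := by
    obtain ⟨Q, ⟨e⟩⟩ := exists_strict R P.obj
    exact ⟨⟨Q⟩, ⟨e.symm⟩⟩

theorem statement15 : (downInclusion R).IsEquivalence := {}

end Statements

end ReedyPaper
end
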